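/- For any invertible matrix $g \in \mathrm{GL}(d,\mathbb{C})$, HPD matrices $p, q$, and Hermitian matrix $h$: $g^* \mathrm{Log}_p(q)\, g = \mathrm{Log}_{g^* p g}(g^* q g)$ and $g^* \mathrm{Exp}_p(h)\, g = \mathrm{Exp}_{g^* p g}(g^* h g)$. -/

import Mathlib

set_option maxHeartbeats 800000

open Matrix
open scoped ComplexOrder Classical

variable {d : ℕ}

/-- Frobenius norm of a complex matrix. -/
noncomputable def frob (A : Matrix (Fin d) (Fin d) ℂ) : ℝ :=
  Real.sqrt (∑ i, ∑ j, ‖A i j‖ ^ 2)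

/-- The unique positive semidefinite square root (junk value `0` if not PSD). -/

noncomputable def msqrt (A : Matrix (Fin d) (Fin d) ℂ) : Matrix (Fin d) (Fin d) ℂ :=
  if h : A.PosSemidef then
    (h.1.eigenvectorUnitary : Matrix (Fin d) (Fin d) ℂ) *
      Matrix.diagonal ((↑) ∘ Real.sqrt ∘ h.1.eigenvalues) *
      star (h.1.eigenvectorUnitary : Matrix (Fin d) (Fin d) ℂ)
  else 0

/-- Principal matrix logarithm of a Hermitian (positive definite) matrix, via the
spectral decomposition (junk value `0` otherwise). -/

noncomputable def mLog (A : Matrix (Fin d) (Fin d) ℂ) : Matrix (Fin d) (Fin d) ℂ :=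
  if h : A.IsHermitian then
    (h.eigenvectorUnitary : Matrix (Fin d) (Fin d) ℂ) *
      Matrix.diagonal (fun i => (Real.log (h.eigenvalues i) : ℂ)) *
      star (h.eigenvectorUnitary : Matrix (Fin d) (Fin d) ℂ)
  else 0

/-- Matrix exponential. -/
noncomputable def mExp (A : Matrix (Fin d) (Fin d) ℂ) : Matrix (Fin d) (Fin d) ℂ :=
  NormedSpace.exp A

/-- Real power of an HPD matrix: `X^t = Exp(t Log X)`. -/
noncomputable def mpow (A : Matrix (Fin d) (Fin d) ℂ) (t : ℝ) : Matrix (Fin d) (Fin d) ℂ :=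
  mExp ((t : ℂ) • mLog A)

/-- Affine-invariant Riemannian distance on HPD matrices. -/
noncomputable def rdist (p q : Matrix (Fin d) (Fin d) ℂ) : ℝ :=
  frob (mLog ((msqrt p)⁻¹ * q * (msqrt p)⁻¹))

/-- Geodesic midpoint of two HPD matrices. -/
noncomputable def mid (p q : Matrix (Fin d) (Fin d) ℂ) : Matrix (Fin d) (Fin d) ℂ :=
  msqrt p * msqrt ((msqrt p)⁻¹ * q * (msqrt p)⁻¹) * msqrt p

/-- Riemannian exponential map at `p`. -/
noncomputable def rExp (p h : Matrix (Fin d) (Fin d) ℂ) : Matrix (Fin d) (Fin d) ℂ :=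
  msqrt p * mExp ((msqrt p)⁻¹ * h * (msqrt p)⁻¹) * msqrt p

/-- Riemannian logarithm map at `p`. -/
noncomputable def rLog (p q : Matrix (Fin d) (Fin d) ℂ) : Matrix (Fin d) (Fin d) ℂ :=
  msqrt p * mLog ((msqrt p)⁻¹ * q * (msqrt p)⁻¹) * msqrt p


/-- Conjugation by a unitary as a star algebra homomorphism. -/
noncomputable def conjSAH (u : unitary (Matrix (Fin d) (Fin d) ℂ)) :
    Matrix (Fin d) (Fin d) ℂ →⋆ₐ[ℂ] Matrix (Fin d) (Fin d) ℂ where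
  toFun x := (u : Matrix (Fin d) (Fin d) ℂ) * x * star (u : Matrix (Fin d) (Fin d) ℂ)
  map_one' := by simpa using unitary.coe_mul_star_self u
  map_mul' x y := by
    have h : star (u : Matrix (Fin d) (Fin d) ℂ) * u = 1 := Unitary.coe_star_mul_self u
    calc (u : Matrix (Fin d) (Fin d) ℂ) * (x * y) * star (u : Matrix (Fin d) (Fin d) ℂ)
        = (u : Matrix (Fin d) (Fin d) ℂ) * x * ((star (u : Matrix (Fin d) (Fin d) ℂ) * u) * y) * star (u : Matrix (Fin d) (Fin d) ℂ) := by
          rw [h]; noncomm_ring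
      _ = _ := by noncomm_ring
  map_zero' := by simp
  map_add' x y := by noncomm_ring
  commutes' c := by
    simp only [Algebra.algebraMap_eq_smul_one, Matrix.smul_mul, Matrix.mul_smul, mul_one]
    rw [show (u : Matrix (Fin d) (Fin d) ℂ) * star (u : Matrix (Fin d) (Fin d) ℂ) = 1 from Unitary.coe_mul_star_self u]
  map_star' x := by simp [StarMul.star_mul, mul_assoc]

lemma cfc_unitary_conj (f : ℝ → ℝ) {u A : Matrix (Fin d) (Fin d) ℂ}
    (hu : u ∈ unitary (Matrix (Fin d) (Fin d) ℂ)) (hA : A.IsHermitian) :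
    cfc f (u * A * star u) = u * cfc f A * star u := by
  have hA' : IsSelfAdjoint A := hA
  have hcont : Continuous (conjSAH (d := d) ⟨u, hu⟩) := by
    show Continuous fun x : Matrix (Fin d) (Fin d) ℂ => u * x * star u
    exact (continuous_const.mul continuous_id).mul continuous_const
  have hφa : IsSelfAdjoint ((conjSAH (d := d) ⟨u, hu⟩) A) := by
    show IsSelfAdjoint (u * A * star u)
    rw [isSelfAdjoint_iff]
    simp only [StarMul.star_mul, star_star, hA'.star_eq, ← mul_assoc]
  exact (StarAlgHomClass.map_cfc (S := ℂ) (conjSAH (d := d) ⟨u, hu⟩) f A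
    (by rw [continuousOn_iff_continuous_restrict]; fun_prop) hcont hA' hφa).symm

lemma mLog_eq_cfc {A : Matrix (Fin d) (Fin d) ℂ} (hA : A.IsHermitian) :
    mLog A = cfc Real.log A := by
  rw [mLog, dif_pos hA, hA.cfc_eq]
  rfl

lemma msqrt_eq_cfc {A : Matrix (Fin d) (Fin d) ℂ} (hA : A.PosSemidef) :
    msqrt A = cfc Real.sqrt A := by
  rw [msqrt, dif_pos hA, hA.1.cfc_eq]
  rfl

lemma msqrt_isHermitian {A : Matrix (Fin d) (Fin d) ℂ} (hA : A.PosSemidef) :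
    (msqrt A).IsHermitian := by
  rw [msqrt_eq_cfc hA]
  exact cfc_predicate Real.sqrt A

lemma msqrt_mul_self {A : Matrix (Fin d) (Fin d) ℂ} (hA : A.PosSemidef) :
    msqrt A * msqrt A = A := by
  have hA' : IsSelfAdjoint A := hA.1
  rw [msqrt_eq_cfc hA, ← cfc_mul Real.sqrt Real.sqrt A]
  conv_rhs => rw [← cfc_id' ℝ A hA']
  refine cfc_congr fun x hx => ?_
  rw [hA.1.spectrum_real_eq_range_eigenvalues] at hx
  obtain ⟨i, rfl⟩ := hx
  exact Real.mul_self_sqrt (hA.eigenvalues_nonneg i)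

lemma mLog_unitary_conj {u A : Matrix (Fin d) (Fin d) ℂ}
    (hu : u ∈ unitary (Matrix (Fin d) (Fin d) ℂ)) (hA : A.IsHermitian) :
    mLog (u * A * star u) = u * mLog A * star u := by
  have hA' : (u * A * star u).IsHermitian := by
    have h1 : IsSelfAdjoint A := hA
    have : IsSelfAdjoint (u * A * star u) := by
      rw [isSelfAdjoint_iff]
      simp only [StarMul.star_mul, star_star, h1.star_eq, ← mul_assoc]
    exact this
  rw [mLog_eq_cfc hA, mLog_eq_cfc hA', cfc_unitary_conj Real.log hu hA]

/-- the Riemannian Log and Exp maps are equivariant under congruence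
transformation by any invertible matrix `g`. -/
theorem rLog_rExp_congruence_equivariant {d : ℕ} (g p q h : Matrix (Fin d) (Fin d) ℂ)
    (hg : IsUnit g) (hp : p.PosDef) (hq : q.PosDef) (hh : h.IsHermitian) :
    gᴴ * rLog p q * g = rLog (gᴴ * p * g) (gᴴ * q * g) ∧
    gᴴ * rExp p h * g = rExp (gᴴ * p * g) (gᴴ * h * g) := by
  unfold rLog rExp
  set s' := msqrt (gᴴ * p * g) with hs'def
  set s := msqrt p with hsdef
  have hpsd : p.PosSemidef := hp.posSemidef
  have hpsd' : (gᴴ * p * g).PosSemidef := hpsd.conjTranspose_mul_mul_same g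
  have hsH : s.IsHermitian := msqrt_isHermitian hpsd
  have hs'H : s'.IsHermitian := msqrt_isHermitian hpsd'
  have hss : s * s = p := msqrt_mul_self hpsd
  have hs's' : s' * s' = gᴴ * p * g := msqrt_mul_self hpsd'
  have hsU : IsUnit s := by
    rw [Matrix.isUnit_iff_isUnit_det]
    have : IsUnit (s.det * s.det) := by
      rw [← Matrix.det_mul, hss]
      exact (Matrix.isUnit_iff_isUnit_det p).mp hp.isUnit
    exact isUnit_of_mul_isUnit_left this
  have hpgU : IsUnit (gᴴ * p * g) := (hg.star.mul hp.isUnit).mul hg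
  have hs'U : IsUnit s' := by
    rw [Matrix.isUnit_iff_isUnit_det]
    have : IsUnit (s'.det * s'.det) := by
      rw [← Matrix.det_mul, hs's']
      exact (Matrix.isUnit_iff_isUnit_det _).mp hpgU
    exact isUnit_of_mul_isUnit_left this
  have hinvs : s⁻¹ * s = 1 := Matrix.nonsing_inv_mul s ((Matrix.isUnit_iff_isUnit_det s).mp hsU)
  have hsinv : s * s⁻¹ = 1 := Matrix.mul_nonsing_inv s ((Matrix.isUnit_iff_isUnit_det s).mp hsU)
  have hinvs' : s'⁻¹ * s' = 1 := Matrix.nonsing_inv_mul s' ((Matrix.isUnit_iff_isUnit_det s').mp hs'U)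
  have hs'inv : s' * s'⁻¹ = 1 := Matrix.mul_nonsing_inv s' ((Matrix.isUnit_iff_isUnit_det s').mp hs'U)
  have hsinvH : (s⁻¹).IsHermitian := hsH.inv
  have hs'invH : (s'⁻¹).IsHermitian := hs'H.inv
  set u := s'⁻¹ * gᴴ * s with hu_eq
  have hstaru : star u = s * g * s'⁻¹ := by
    rw [hu_eq, star_eq_conjTranspose, Matrix.conjTranspose_mul, Matrix.conjTranspose_mul,
      Matrix.conjTranspose_conjTranspose, Matrix.conjTranspose_nonsing_inv, hsH.eq, hs'H.eq,
      mul_assoc]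
  have huu : u * star u = 1 := by
    calc u * star u
        = s'⁻¹ * (gᴴ * (s * s) * g) * s'⁻¹ := by rw [hstaru, hu_eq]; noncomm_ring
      _ = s'⁻¹ * (s' * s') * s'⁻¹ := by rw [hss, hs's']
      _ = (s'⁻¹ * s') * (s' * s'⁻¹) := by noncomm_ring
      _ = 1 := by rw [hinvs', hs'inv, one_mul]
  have hu : u ∈ unitary (Matrix (Fin d) (Fin d) ℂ) := by
    rw [Unitary.mem_iff]
    exact ⟨mul_eq_one_comm.mp huu, huu⟩
  have key : ∀ X : Matrix (Fin d) (Fin d) ℂ,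
      u * (s⁻¹ * X * s⁻¹) * star u = s'⁻¹ * (gᴴ * X * g) * s'⁻¹ := by
    intro X
    calc u * (s⁻¹ * X * s⁻¹) * star u
        = s'⁻¹ * (gᴴ * ((s * s⁻¹) * X * (s⁻¹ * s)) * g) * s'⁻¹ := by
          rw [hstaru, hu_eq]; noncomm_ring
      _ = s'⁻¹ * (gᴴ * X * g) * s'⁻¹ := by rw [hsinv, hinvs, one_mul, mul_one]
  have wrap : ∀ Y : Matrix (Fin d) (Fin d) ℂ,
      s' * (u * Y * star u) * s' = gᴴ * (s * Y * s) * g := by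
    intro Y
    calc s' * (u * Y * star u) * s'
        = (s' * s'⁻¹) * (gᴴ * (s * Y * s) * g) * (s'⁻¹ * s') := by
          rw [hstaru, hu_eq]; noncomm_ring
      _ = gᴴ * (s * Y * s) * g := by rw [hs'inv, hinvs', one_mul, mul_one]
  have huU : IsUnit u := ⟨⟨u, star u, huu, mul_eq_one_comm.mp huu⟩, rfl⟩
  have huinv : u⁻¹ = star u := Matrix.inv_eq_right_inv huu
  have expconj : ∀ X : Matrix (Fin d) (Fin d) ℂ,
      mExp (u * X * star u) = u * mExp X * star u := by
    intro X
    have h1 : ((huU.unit⁻¹ : (Matrix (Fin d) (Fin d) ℂ)ˣ) : Matrix (Fin d) (Fin d) ℂ) = star u := by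
      rw [Matrix.coe_units_inv, IsUnit.unit_spec, huinv]
    have h2 := Matrix.exp_units_conj huU.unit X
    rw [h1, IsUnit.unit_spec] at h2
    exact h2
  constructor
  · have hAH : (s⁻¹ * q * s⁻¹).IsHermitian := by
      have := Matrix.isHermitian_conjTranspose_mul_mul (s⁻¹) hq.isHermitian
      rwa [hsinvH.eq] at this
    calc gᴴ * (s * mLog (s⁻¹ * q * s⁻¹) * s) * g
        = s' * (u * mLog (s⁻¹ * q * s⁻¹) * star u) * s' := (wrap _).symm
      _ = s' * mLog (u * (s⁻¹ * q * s⁻¹) * star u) * s' := by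
          rw [mLog_unitary_conj hu hAH]
      _ = s' * mLog (s'⁻¹ * (gᴴ * q * g) * s'⁻¹) * s' := by rw [key q]
  · calc gᴴ * (s * mExp (s⁻¹ * h * s⁻¹) * s) * g
        = s' * (u * mExp (s⁻¹ * h * s⁻¹) * star u) * s' := (wrap _).symm
      _ = s' * mExp (u * (s⁻¹ * h * s⁻¹) * star u) * s' := by rw [expconj]
      _ = s' * mExp (s'⁻¹ * (gᴴ * h * g) * s'⁻¹) * s' := by rw [key h]
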